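/- Or rule: for events A, B, C with P(A) > 0 and P(B) > 0, if the prevision z of C2 := ⟦(C|A)∧(C|B)⟧ is strictly positive, then the iterated conditional satisfies ⟦(C|(A∪B))|((C|A)∧(C|B))⟧(ω) = 1 for every ω ∈ Ω. -/
import Mathlib


open MeasureTheory Set
open scoped Classical

noncomputable section

variable {Ω : Type*} [MeasurableSpace Ω]

/-- Indicator (with values in `ℝ`) of a set. -/
def ind (A : Set Ω) : Ω → ℝ := A.indicator 1

/-- Conditional probability `P(A|H) = P(A ∩ H)/P(H)`. -/
def condProb (P : Measure Ω) (A H : Set Ω) : ℝ :=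
  (P (A ∩ H)).toReal / (P H).toReal

/-- The (indicator of the) conditional event `A|H`,
`⟦A|H⟧ = 1_{A∩H} + P(A|H)·1_{Hᶜ}`. -/
def condEvent (P : Measure Ω) (A H : Set Ω) : Ω → ℝ :=
  fun ω => ind (A ∩ H) ω + condProb P A H * ind Hᶜ ω

/-- The prevision `z` of the conjunction `(A|H) ∧ (B|K)`:
`z = E[min(⟦A|H⟧, ⟦B|K⟧)·1_{H∪K}]/P(H∪K)`. -/
def conjPrev (P : Measure Ω) (A H B K : Set Ω) : ℝ :=
  (∫ ω, min (condEvent P A H ω) (condEvent P B K ω) * ind (H ∪ K) ω ∂P) /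
    (P (H ∪ K)).toReal

/-- The conjunction `⟦(A|H) ∧ (B|K)⟧ = min(⟦A|H⟧, ⟦B|K⟧)·1_{H∪K} + z·1_{(H∪K)ᶜ}`. -/
def conjCE (P : Measure Ω) (A H B K : Set Ω) : Ω → ℝ :=
  fun ω => min (condEvent P A H ω) (condEvent P B K ω) * ind (H ∪ K) ω
    + conjPrev P A H B K * ind (H ∪ K)ᶜ ω

/-- The iterated conditional `⟦(B|K)|(A|H)⟧ = ⟦(A|H)∧(B|K)⟧ + μ·(1 − ⟦A|H⟧)`,
with `μ = z / P(A|H)`. -/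
def iterCond (P : Measure Ω) (A H B K : Set Ω) : Ω → ℝ :=
  fun ω => conjCE P A H B K ω +
    (conjPrev P A H B K / condProb P A H) * (1 - condEvent P A H ω)

/-- Goodman–Nguyen logical implication between conditional events:
`A|H ⊑ B|K` iff `A∩H ⊆ B∩K` and `Bᶜ∩K ⊆ Aᶜ∩H`. -/
def GNle (A H B K : Set Ω) : Prop := A ∩ H ⊆ B ∩ K ∧ Bᶜ ∩ K ⊆ Aᶜ ∩ H

/-- Or rule: `min(⟦C|(A∪B)⟧, ⟦C|A⟧, ⟦C|B⟧)`. -/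
def orMin (P : Measure Ω) (A B C : Set Ω) : Ω → ℝ :=
  fun ω => min (condEvent P C (A ∪ B) ω) (min (condEvent P C A ω) (condEvent P C B ω))

/-- Or rule: the prevision `t = E[min(⟦C|(A∪B)⟧, ⟦C|A⟧, ⟦C|B⟧)·1_{A∪B}]/P(A∪B)`
of the triple conjunction. -/
def orPrev (P : Measure Ω) (A B C : Set Ω) : ℝ :=
  (∫ ω, orMin P A B C ω * ind (A ∪ B) ω ∂P) / (P (A ∪ B)).toReal

/-- Or rule: the triple conjunction
`T3 = ⟦(C|(A∪B))∧(C|A)∧(C|B)⟧ = min(⟦C|(A∪B)⟧, ⟦C|A⟧, ⟦C|B⟧)·1_{A∪B} + t·1_{(A∪B)ᶜ}`. -/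
def orT3 (P : Measure Ω) (A B C : Set Ω) : Ω → ℝ :=
  fun ω => orMin P A B C ω * ind (A ∪ B) ω + orPrev P A B C * ind (A ∪ B)ᶜ ω

/-- Or rule: the iterated conditional
`⟦(C|(A∪B))|((C|A)∧(C|B))⟧ = T3 + (t/z)·(1 − C2)` where `C2 = ⟦(C|A)∧(C|B)⟧`. -/
def orIter (P : Measure Ω) (A B C : Set Ω) : Ω → ℝ :=
  fun ω => orT3 P A B C ω +
    (orPrev P A B C / conjPrev P C A C B) * (1 - conjCE P C A C B ω)

lemma ind_of_mem {A : Set Ω} {ω : Ω} (h : ω ∈ A) : ind A ω = 1 := by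
  simp [ind, Set.indicator_of_mem h]

lemma ind_of_not_mem {A : Set Ω} {ω : Ω} (h : ω ∉ A) : ind A ω = 0 := by
  simp [ind, Set.indicator_of_notMem h]

lemma ind_nonneg (A : Set Ω) (ω : Ω) : 0 ≤ ind A ω := by
  by_cases h : ω ∈ A
  · simp [ind_of_mem h]
  · simp [ind_of_not_mem h]

lemma ind_le_one (A : Set Ω) (ω : Ω) : ind A ω ≤ 1 := by
  by_cases h : ω ∈ A
  · simp [ind_of_mem h]
  · simp [ind_of_not_mem h]

lemma condProb_nonneg (P : Measure Ω) (A H : Set Ω) : 0 ≤ condProb P A H :=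
  div_nonneg ENNReal.toReal_nonneg ENNReal.toReal_nonneg

lemma condProb_le_one (P : Measure Ω) [IsProbabilityMeasure P] (A H : Set Ω) :
    condProb P A H ≤ 1 := by
  apply div_le_one_of_le₀
  · exact ENNReal.toReal_mono (measure_ne_top P H) (measure_mono Set.inter_subset_right)
  · exact ENNReal.toReal_nonneg

lemma condEvent_nonneg (P : Measure Ω) (A H : Set Ω) (ω : Ω) :
    0 ≤ condEvent P A H ω :=
  add_nonneg (ind_nonneg _ _) (mul_nonneg (condProb_nonneg P A H) (ind_nonneg _ _))

lemma condEvent_le_one (P : Measure Ω) [IsProbabilityMeasure P] (A H : Set Ω) (ω : Ω) :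
    condEvent P A H ω ≤ 1 := by
  unfold condEvent
  by_cases h : ω ∈ H
  · rw [ind_of_not_mem (by simpa using h : ω ∉ Hᶜ)]
    simpa using ind_le_one (A ∩ H) ω
  · rw [ind_of_not_mem (fun hm => h hm.2), ind_of_mem (by simpa using h : ω ∈ Hᶜ)]
    simpa using condProb_le_one P A H

lemma condEvent_of_mem_both (P : Measure Ω) {A H : Set Ω} {ω : Ω}
    (hA : ω ∈ A) (hH : ω ∈ H) : condEvent P A H ω = 1 := by
  unfold condEvent
  rw [ind_of_mem (Set.mem_inter hA hH), ind_of_not_mem (by simpa using hH : ω ∉ Hᶜ)]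
  ring

lemma condEvent_of_notMem_mem (P : Measure Ω) {A H : Set Ω} {ω : Ω}
    (hA : ω ∉ A) (hH : ω ∈ H) : condEvent P A H ω = 0 := by
  unfold condEvent
  rw [ind_of_not_mem (fun hm => hA hm.1), ind_of_not_mem (by simpa using hH : ω ∉ Hᶜ)]
  ring

/-- Key pointwise identity: on `A ∪ B`, the triple min coincides with the double min. -/
lemma orMin_mul_ind (P : Measure Ω) [IsProbabilityMeasure P] (A B C : Set Ω) (ω : Ω) :
    orMin P A B C ω * ind (A ∪ B) ω =
      min (condEvent P C A ω) (condEvent P C B ω) * ind (A ∪ B) ω := by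
  by_cases hU : ω ∈ A ∪ B
  · have : orMin P A B C ω = min (condEvent P C A ω) (condEvent P C B ω) := by
      unfold orMin
      by_cases hC : ω ∈ C
      · have hcU : condEvent P C (A ∪ B) ω = 1 := condEvent_of_mem_both P hC hU
        rw [hcU]
        exact min_eq_right (le_trans (min_le_min (condEvent_le_one P C A ω)
          (condEvent_le_one P C B ω)) (by simp))
      · have hcU : condEvent P C (A ∪ B) ω = 0 := condEvent_of_notMem_mem P hC hU
        have hmin0 : min (condEvent P C A ω) (condEvent P C B ω) = 0 := by
          rcases hU with hA | hB
          · exact le_antisymm (le_trans (min_le_left _ _)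
              (le_of_eq (condEvent_of_notMem_mem P hC hA)))
              (le_min (condEvent_nonneg P C A ω) (condEvent_nonneg P C B ω))
          · exact le_antisymm (le_trans (min_le_right _ _)
              (le_of_eq (condEvent_of_notMem_mem P hC hB)))
              (le_min (condEvent_nonneg P C A ω) (condEvent_nonneg P C B ω))
        rw [hcU, hmin0]
        simp
    rw [this]
  · rw [ind_of_not_mem hU]
    ring

lemma orPrev_eq_conjPrev (P : Measure Ω) [IsProbabilityMeasure P] (A B C : Set Ω) :
    orPrev P A B C = conjPrev P C A C B := by
  unfold orPrev conjPrev
  congr 1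
  exact integral_congr_ae (Filter.Eventually.of_forall (orMin_mul_ind P A B C))

lemma orT3_eq_conjCE (P : Measure Ω) [IsProbabilityMeasure P] (A B C : Set Ω) (ω : Ω) :
    orT3 P A B C ω = conjCE P C A C B ω := by
  unfold orT3 conjCE
  rw [orMin_mul_ind P A B C ω, orPrev_eq_conjPrev P A B C]

/-- Or rule: if the prevision `z` of `C2 = ⟦(C|A)∧(C|B)⟧` is strictly positive,
then the iterated conditional `⟦(C|(A∪B))|((C|A)∧(C|B))⟧` is constantly `1`. -/
theorem or_rule (P : Measure Ω) [IsProbabilityMeasure P]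
    (A B C : Set Ω)
    (hAm : MeasurableSet A) (hBm : MeasurableSet B) (hCm : MeasurableSet C)
    (hA : 0 < P A) (hB : 0 < P B)
    (hz : 0 < conjPrev P C A C B) :
    ∀ ω, orIter P A B C ω = 1 := by
  intro ω
  unfold orIter
  rw [orT3_eq_conjCE P A B C ω, orPrev_eq_conjPrev P A B C, div_self hz.ne']
  ring

end
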